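/- arXiv:2411.13822 — 3 statements merged into one kernel-verified Lean document; each statement's English description precedes it below -/
import Mathlib

section
/- Let J ≥ 2 be an integer, s ∈ (0,1), l_j = s^{j−1} for j = 1,…,J, and let φ_1,…,φ_J > 0. Let γ ∈ ℝ, c > 0, and ε ∈ [0, 1/2], and let Q_1,…,Q_J > 0 satisfy |Q_j/(c · l_j^{−γ}) − 1| ≤ ε for every j. Then the refined Hill functional γ̂ = (Σ_{j=1}^J φ_j log(1/l_j))^{−1} Σ_{j=1}^J φ_j log(Q_j/Q_1) satisfies |γ̂ − γ| ≤ 4ε · (Σ_{j=1}^J φ_j)/(Σ_{j=1}^J φ_j log(1/l_j)). In particular, if all intermediate quantile values are estimated with relative error at most ε ≤ 1/2, the refined Hill estimate of the extreme value index has error O(ε). -/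
/-- If `t` has relative error at most `ε ≤ 1/2` w.r.t. `a > 0`, then
`|log t - log a| ≤ 2 ε`. -/
lemma log_err_aux {t a ε : ℝ} (ht : 0 < t) (ha : 0 < a) (hε : ε ≤ 1/2)
    (h : |t / a - 1| ≤ ε) : |Real.log t - Real.log a| ≤ 2 * ε := by
  set u := t / a with hu
  have hu0 : 0 < u := div_pos ht ha
  have h1 : u - 1 ≤ ε := (abs_le.mp h).2
  have h2 : 1 - ε ≤ u := by have := (abs_le.mp h).1; linarith
  have hhalf : (1:ℝ)/2 ≤ u := by linarith
  have hlog : Real.log t - Real.log a = Real.log u := (Real.log_div ht.ne' ha.ne').symm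
  rw [hlog]
  rcases le_or_gt 1 u with hc | hc
  · have h3 : Real.log u ≤ u - 1 := Real.log_le_sub_one_of_pos hu0
    have h4 : 0 ≤ Real.log u := Real.log_nonneg hc
    rw [abs_of_nonneg h4]
    have : 0 ≤ ε := le_trans (abs_nonneg _) h
    linarith
  · have h4 : Real.log u ≤ 0 := (Real.log_nonpos_iff hu0.le).mpr hc.le
    rw [abs_of_nonpos h4]
    have h5 : Real.log u⁻¹ ≤ u⁻¹ - 1 := Real.log_le_sub_one_of_pos (by positivity)
    rw [Real.log_inv] at h5
    have h6 : u⁻¹ - 1 = (1 - u) / u := by field_simp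
    have h7 : (1 - u) / u ≤ 2 * (1 - u) := by
      rw [div_le_iff₀ hu0]
      nlinarith
    nlinarith

/-- Deterministic perturbation bound for the refined Hill functional: if each
intermediate quantile value `Q_j` has relative error at most `ε ≤ 1/2` with
respect to the exact Pareto values `c · l_j^{-γ}`, then the refined Hill
estimate of the extreme value index has error at most
`4ε (Σ φ_j)/(Σ φ_j log(1/l_j))`. -/
theorem stmt2 (J : ℕ) (hJ : 2 ≤ J) (s : ℝ) (hs : s ∈ Set.Ioo (0:ℝ) 1)
    (l : Fin J → ℝ) (hl : ∀ j : Fin J, l j = s ^ (j : ℕ))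
    (φ : Fin J → ℝ) (hφ : ∀ j, 0 < φ j)
    (γ c ε : ℝ) (hc : 0 < c) (hε : ε ∈ Set.Icc (0:ℝ) (1/2))
    (Q : Fin J → ℝ) (hQpos : ∀ j, 0 < Q j)
    (hQ : ∀ j, |Q j / (c * (l j) ^ (-γ)) - 1| ≤ ε) :
    |(∑ j, φ j * Real.log (1 / l j))⁻¹ *
        (∑ j, φ j * Real.log (Q j / Q ⟨0, by omega⟩)) - γ| ≤
      4 * ε * (∑ j, φ j) / (∑ j, φ j * Real.log (1 / l j)) := by
  obtain ⟨hs0, hs1⟩ := hs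
  obtain ⟨hε0, hε2⟩ := hε
  have hlpos : ∀ j : Fin J, 0 < l j := fun j => by rw [hl j]; positivity
  have hlle1 : ∀ j : Fin J, l j ≤ 1 := fun j => by
    rw [hl j]; exact pow_le_one₀ hs0.le hs1.le
  set j0 : Fin J := ⟨0, by omega⟩ with hj0
  set j1 : Fin J := ⟨1, by omega⟩ with hj1
  set D := ∑ j, φ j * Real.log (1 / l j) with hD
  have hterm : ∀ j : Fin J, 0 ≤ φ j * Real.log (1 / l j) := fun j => by
    apply mul_nonneg (hφ j).le
    apply Real.log_nonneg
    rw [le_div_iff₀ (hlpos j), one_mul]; exact hlle1 j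
  have hDpos : 0 < D := by
    apply Finset.sum_pos' (fun j _ => hterm j)
    refine ⟨j1, Finset.mem_univ _, ?_⟩
    apply mul_pos (hφ j1)
    apply Real.log_pos
    rw [lt_div_iff₀ (hlpos j1), one_mul, hl j1]
    simpa [hj1] using hs1
  -- auxiliary definitions
  set a : Fin J → ℝ := fun j => c * (l j) ^ (-γ) with ha
  have hapos : ∀ j, 0 < a j := fun j => by
    apply mul_pos hc (Real.rpow_pos_of_pos (hlpos j) _)
  set δ : Fin J → ℝ := fun j => Real.log (Q j) - Real.log (a j) with hδ
  have hδbound : ∀ j, |δ j| ≤ 2 * ε :=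
    fun j => log_err_aux (hQpos j) (hapos j) hε2 (hQ j)
  have hloga : ∀ j : Fin J, Real.log (a j) = Real.log c + (-γ) * Real.log (l j) := by
    intro j
    rw [ha]
    simp only
    rw [Real.log_mul hc.ne' (Real.rpow_pos_of_pos (hlpos j) _).ne',
      Real.log_rpow (hlpos j)]
  have hl0 : l j0 = 1 := by rw [hl j0]; simp [hj0]
  have hkey : ∀ j : Fin J, Real.log (Q j / Q j0)
      = (δ j - δ j0) + γ * Real.log (1 / l j) := by
    intro j
    rw [Real.log_div (hQpos j).ne' (hQpos j0).ne', one_div, Real.log_inv]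
    have := hloga j
    have := hloga j0
    have hlog0 : Real.log (l j0) = 0 := by rw [hl0, Real.log_one]
    simp only [hδ]
    rw [hloga j, hloga j0, hlog0]
    ring
  have hsum : ∑ j, φ j * Real.log (Q j / Q j0)
      = (∑ j, φ j * (δ j - δ j0)) + γ * D := by
    rw [hD, Finset.mul_sum, ← Finset.sum_add_distrib]
    apply Finset.sum_congr rfl
    intro j _
    rw [hkey j]
    ring
  rw [hsum]
  have hrw : D⁻¹ * ((∑ j, φ j * (δ j - δ j0)) + γ * D) - γ
      = D⁻¹ * (∑ j, φ j * (δ j - δ j0)) := by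
    field_simp
    ring
  rw [hrw, abs_mul, abs_of_nonneg (inv_nonneg.mpr hDpos.le)]
  have hE : |∑ j, φ j * (δ j - δ j0)| ≤ 4 * ε * (∑ j, φ j) := by
    calc |∑ j, φ j * (δ j - δ j0)| ≤ ∑ j, |φ j * (δ j - δ j0)| :=
          Finset.abs_sum_le_sum_abs _ _
      _ ≤ ∑ j, φ j * (4 * ε) := by
          apply Finset.sum_le_sum
          intro j _
          rw [abs_mul, abs_of_pos (hφ j)]
          apply mul_le_mul_of_nonneg_left _ (hφ j).le
          calc |δ j - δ j0| ≤ |δ j| + |δ j0| := abs_sub _ _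
            _ ≤ 2 * ε + 2 * ε := add_le_add (hδbound j) (hδbound j0)
            _ = 4 * ε := by ring
      _ = 4 * ε * (∑ j, φ j) := by rw [← Finset.sum_mul]; ring
  calc D⁻¹ * |∑ j, φ j * (δ j - δ j0)| ≤ D⁻¹ * (4 * ε * (∑ j, φ j)) :=
        mul_le_mul_of_nonneg_left hE (inv_nonneg.mpr hDpos.le)
    _ = 4 * ε * (∑ j, φ j) / D := by rw [div_eq_mul_inv]; ring
end

section
/- Let γ > 0 and let F : ℝ → ℝ be a continuous cumulative distribution function, differentiable with derivative f, such that F(t) < 1 for all t ∈ ℝ. For τ ∈ (0,1) let Q(τ) = inf{y ∈ ℝ : F(y) ≥ τ}. Assume the von Mises condition lim_{t→∞} t·f(t)/(1 − F(t)) = 1/γ, and assume lim_{τ→1⁻} (1 − τ)^{γ}·Q(τ) = c for some c > 0. Then lim_{τ→1⁻} f(Q(τ))/(1 − τ)^{γ+1} = 1/(γ·c); in particular the density evaluated at the τth quantile decays at rate (1 − τ)^{γ+1} as τ → 1. -/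
open Filter

/-- Rate of decay of the density at the `τ`-th quantile for a heavy-tailed
distribution: under the von Mises condition `t f(t)/(1 - F(t)) → 1/γ` and
`(1-τ)^γ Q(τ) → c > 0`, one has `f(Q(τ))/(1-τ)^{γ+1} → 1/(γ c)` as `τ → 1⁻`. -/
theorem stmt9 (γ : ℝ) (hγ : 0 < γ) (F f : ℝ → ℝ)
    (hmono : Monotone F) (hcont : Continuous F)
    (hbot : Tendsto F atBot (nhds 0)) (htop : Tendsto F atTop (nhds 1))
    (hderiv : ∀ t : ℝ, HasDerivAt F (f t) t)
    (hlt : ∀ t : ℝ, F t < 1)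
    (Q : ℝ → ℝ) (hQ : ∀ τ ∈ Set.Ioo (0:ℝ) 1, Q τ = sInf {y : ℝ | τ ≤ F y})
    (hvonMises : Tendsto (fun t : ℝ => t * f t / (1 - F t)) atTop (nhds (1 / γ)))
    (c : ℝ) (hc : 0 < c)
    (hQrate : Tendsto (fun τ : ℝ => (1 - τ) ^ γ * Q τ)
      (nhdsWithin 1 (Set.Iio 1)) (nhds c)) :
    Tendsto (fun τ : ℝ => f (Q τ) / (1 - τ) ^ (γ + 1))
      (nhdsWithin 1 (Set.Iio 1)) (nhds (1 / (γ * c))) := by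
  set l := nhdsWithin (1:ℝ) (Set.Iio 1) with hl
  -- eventually 0 < τ < 1
  have hlt1 : ∀ᶠ τ : ℝ in l, τ < 1 := eventually_mem_nhdsWithin
  have hgt0 : ∀ᶠ τ : ℝ in l, (0:ℝ) < τ :=
    eventually_nhdsWithin_of_eventually_nhds (eventually_gt_nhds (by norm_num))
  -- F (Q τ) = τ for τ ∈ (0,1)
  have hFQ : ∀ τ : ℝ, τ ∈ Set.Ioo (0:ℝ) 1 → F (Q τ) = τ := by
    intro τ hτ
    obtain ⟨hτ0, hτ1⟩ := hτ
    have hSclosed : IsClosed {y : ℝ | τ ≤ F y} := isClosed_le continuous_const hcont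
    have hSne : Set.Nonempty {y : ℝ | τ ≤ F y} := by
      obtain ⟨x, hx⟩ := (htop.eventually (eventually_gt_nhds hτ1)).exists
      exact ⟨x, le_of_lt hx⟩
    have hSbdd : BddBelow {y : ℝ | τ ≤ F y} := by
      obtain ⟨x, hx⟩ := (hbot.eventually (eventually_lt_nhds hτ0)).exists
      refine ⟨x, fun y hy => ?_⟩
      by_contra hxy
      push_neg at hxy
      exact absurd (le_trans hy (hmono hxy.le)) (not_le.mpr hx)
    have hQmem : Q τ ∈ {y : ℝ | τ ≤ F y} := by
      rw [hQ τ ⟨hτ0, hτ1⟩]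
      exact hSclosed.csInf_mem hSne hSbdd
    refine le_antisymm ?_ hQmem
    by_contra h
    push_neg at h
    have hcontat : ∀ᶠ y in nhds (Q τ), τ < F y :=
      hcont.continuousAt.eventually (eventually_gt_nhds h)
    rw [Metric.eventually_nhds_iff] at hcontat
    obtain ⟨ε, hε, hball⟩ := hcontat
    have hmem : Q τ - ε / 2 ∈ {y : ℝ | τ ≤ F y} := by
      have hd : dist (Q τ - ε / 2) (Q τ) < ε := by
        rw [Real.dist_eq, abs_of_nonpos (by linarith)]
        linarith
      exact (hball hd).le
    have := csInf_le hSbdd hmem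
    rw [← hQ τ ⟨hτ0, hτ1⟩] at this
    linarith
  -- (1-τ)^γ → 0 within positives
  have hsub : Tendsto (fun τ : ℝ => 1 - τ) l (nhds 0) := by
    have h1 : Tendsto (fun τ : ℝ => 1 - τ) (nhds (1:ℝ)) (nhds 0) := by
      have h2 : Continuous (fun τ : ℝ => 1 - τ) := continuous_const.sub continuous_id
      simpa using h2.tendsto (1:ℝ)
    exact h1.mono_left nhdsWithin_le_nhds
  have hpow0 : Tendsto (fun τ : ℝ => (1 - τ) ^ γ) l (nhdsWithin 0 (Set.Ioi 0)) := by
    rw [tendsto_nhdsWithin_iff]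
    constructor
    · have hc1 : ContinuousAt (fun x : ℝ => x ^ γ) 0 :=
        Real.continuousAt_rpow_const 0 γ (Or.inr hγ.le)
      have := hc1.tendsto.comp hsub
      simpa [Real.zero_rpow hγ.ne', Function.comp_def] using this
    · filter_upwards [hlt1] with τ hτ
      exact Real.rpow_pos_of_pos (by linarith) γ
  -- Q τ → ∞
  have hQtop : Tendsto Q l atTop := by
    have hinvpow : Tendsto (fun τ : ℝ => ((1 - τ) ^ γ)⁻¹) l atTop :=
      tendsto_inv_nhdsGT_zero.comp hpow0
    have hmul : Tendsto (fun τ : ℝ => ((1 - τ) ^ γ * Q τ) * ((1 - τ) ^ γ)⁻¹) l atTop :=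
      Filter.Tendsto.pos_mul_atTop hc hQrate hinvpow
    refine hmul.congr' ?_
    filter_upwards [hlt1] with τ hτ
    have hp : (0:ℝ) < (1 - τ) ^ γ := Real.rpow_pos_of_pos (by linarith) γ
    field_simp
  -- eventually Q τ > 0
  have hQpos : ∀ᶠ τ : ℝ in l, 0 < Q τ := hQtop.eventually (eventually_gt_atTop 0)
  -- compose von Mises with Q
  have hcomp : Tendsto (fun τ : ℝ => Q τ * f (Q τ) / (1 - F (Q τ))) l (nhds (1 / γ)) :=
    hvonMises.comp hQtop
  have hinv : Tendsto (fun τ : ℝ => ((1 - τ) ^ γ * Q τ)⁻¹) l (nhds c⁻¹) :=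
    hQrate.inv₀ hc.ne'
  have hprod : Tendsto
      (fun τ : ℝ => (Q τ * f (Q τ) / (1 - F (Q τ))) * ((1 - τ) ^ γ * Q τ)⁻¹)
      l (nhds (1 / (γ * c))) := by
    have := hcomp.mul hinv
    convert this using 2
    field_simp
  refine hprod.congr' ?_
  filter_upwards [hlt1, hgt0, hQpos] with τ h1 h0 hQp
  rw [hFQ τ ⟨h0, h1⟩]
  have h1τ : (0:ℝ) < 1 - τ := by linarith
  have hp : (0:ℝ) < (1 - τ) ^ γ := Real.rpow_pos_of_pos h1τ γ
  rw [Real.rpow_add h1τ, Real.rpow_one]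
  field_simp
end

section
/- Let τ ∈ (0,1), let Y be a real random variable with cumulative distribution function F, and let q ∈ ℝ with F(q) = τ and P(Y ≤ q) = τ. Let m > 0 and δ > 0 and suppose F(q + u) − F(q) ≥ m·u for all u ∈ [0, δ] and F(q) − F(q + u) ≥ m·|u| for all u ∈ [−δ, 0]. Then for every v with |v| ≤ δ, E[ρ_τ(Y − q − v) − ρ_τ(Y − q)] ≥ (m/2)·v², where ρ_τ(u) = u(τ − 1{u < 0}) is the quantile check loss. (The difference ρ_τ(Y − q − v) − ρ_τ(Y − q) is bounded by |v|, hence integrable.) -/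
open MeasureTheory

/-- FTC computation of the interval integral of the step function `1{y ≤ s}`. -/
lemma stmt10_lemB (y a b : ℝ) :
    ∫ s in a..b, (if y ≤ s then (1:ℝ) else 0) = max (b - y) 0 - max (a - y) 0 := by
  have hmono : Monotone (fun s : ℝ => if y ≤ s then (1:ℝ) else 0) := by
    intro s t hst
    by_cases h : y ≤ s
    · simp [h, le_trans h hst]
    · by_cases h' : y ≤ t <;> simp [h, h']
  have hint : IntervalIntegrable (fun s : ℝ => if y ≤ s then (1:ℝ) else 0) volume a b :=
    hmono.intervalIntegrable
  have hcont : ContinuousOn (fun s : ℝ => max (s - y) 0) (Set.uIcc a b) :=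
    ((continuous_id.sub continuous_const).max continuous_const).continuousOn
  have hderiv : ∀ x ∈ Set.Ioo (a ⊓ b) (a ⊔ b),
      HasDerivWithinAt (fun s : ℝ => max (s - y) 0)
        (if y ≤ x then (1:ℝ) else 0) (Set.Ioi x) x := by
    intro x _
    by_cases h : y ≤ x
    · rw [if_pos h]
      have h1 : HasDerivWithinAt (fun s : ℝ => s - y) 1 (Set.Ioi x) x :=
        ((hasDerivAt_id x).sub_const y).hasDerivWithinAt
      refine h1.congr (fun s hs => ?_) ?_
      · rw [max_eq_left]; linarith [Set.mem_Ioi.mp hs]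
      · rw [max_eq_left]; linarith
    · push_neg at h
      rw [if_neg (not_le.mpr h)]
      have h1 : HasDerivWithinAt (fun _ : ℝ => (0:ℝ)) 0 (Set.Ioi x) x :=
        (hasDerivAt_const x 0).hasDerivWithinAt
      refine h1.congr_of_eventuallyEq ?_ ?_
      · filter_upwards [eventually_nhdsWithin_of_eventually_nhds
          (Filter.tendsto_id.eventually_lt_const h)] with s hs
        simp only [id_eq] at hs
        rw [max_eq_right]; linarith
      · rw [max_eq_right]; linarith
  have := intervalIntegral.integral_eq_sub_of_hasDeriv_right hcont hderiv hint
  simpa using this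

/-- Fubini step: expectation of the difference of hinge functions equals the
integral of the distribution function (unsigned version). -/
lemma stmt10_lemC {Ω : Type*} [MeasureSpace Ω] [IsProbabilityMeasure (volume : Measure Ω)]
    (Y : Ω → ℝ) (hYm : Measurable Y) (a b : ℝ) (hab : a ≤ b) :
    ∫ ω, (max (b - Y ω) 0 - max (a - Y ω) 0)
      = ∫ s in Set.Ioc a b, (volume {ω | Y ω ≤ s}).toReal := by
  have hBpt : ∀ ω, max (b - Y ω) 0 - max (a - Y ω) 0
      = ∫ s in Set.Ioc a b, (if Y ω ≤ s then (1:ℝ) else 0) := by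
    intro ω
    rw [← intervalIntegral.integral_of_le hab, stmt10_lemB]
  simp_rw [hBpt]
  haveI : IsFiniteMeasure ((volume : Measure ℝ).restrict (Set.Ioc a b)) := by
    constructor
    rw [Measure.restrict_apply MeasurableSet.univ, Set.univ_inter, Real.volume_Ioc]
    exact ENNReal.ofReal_lt_top
  have hA : MeasurableSet {p : Ω × ℝ | Y p.1 ≤ p.2} :=
    measurableSet_le (hYm.comp measurable_fst) measurable_snd
  have hswap := MeasureTheory.integral_integral_swap
    (f := fun (ω : Ω) (s : ℝ) => if Y ω ≤ s then (1:ℝ) else 0)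
    (μ := (volume : Measure Ω)) (ν := (volume : Measure ℝ).restrict (Set.Ioc a b)) ?_
  · rw [hswap]
    refine setIntegral_congr_fun measurableSet_Ioc (fun s _ => ?_)
    have : (fun ω => if Y ω ≤ s then (1:ℝ) else 0) = Set.indicator {ω | Y ω ≤ s} 1 := by
      funext ω; simp [Set.indicator_apply, Set.mem_setOf_eq]
    rw [this]
    exact MeasureTheory.integral_indicator_one
      (show MeasurableSet {ω | Y ω ≤ s} from hYm measurableSet_Iic)
  · refine (integrable_const (1:ℝ)).mono' ?_ ?_
    · exact (Measurable.ite hA measurable_const measurable_const).aestronglyMeasurable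
    · refine Filter.Eventually.of_forall (fun p => ?_)
      by_cases h : Y p.1 ≤ p.2 <;> simp [Function.uncurry, h]

/-- Signed version of the Fubini step, as an interval integral. -/
lemma stmt10_lemC2 {Ω : Type*} [MeasureSpace Ω] [IsProbabilityMeasure (volume : Measure Ω)]
    (Y : Ω → ℝ) (hYm : Measurable Y) (a b : ℝ) :
    ∫ ω, (max (b - Y ω) 0 - max (a - Y ω) 0)
      = ∫ s in a..b, (volume {ω | Y ω ≤ s}).toReal := by
  rcases le_total a b with hab | hba
  · rw [intervalIntegral.integral_of_le hab]
    exact stmt10_lemC Y hYm a b hab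
  · rw [intervalIntegral.integral_symm b a, intervalIntegral.integral_of_le hba,
      ← stmt10_lemC Y hYm b a hba, ← MeasureTheory.integral_neg]
    congr 1; funext ω; ring

/-- Quadratic lower bound on the excess expected quantile check loss around the
true quantile: if the distribution function of `Y` grows at least linearly with
slope `m` in a `δ`-neighborhood of the `τ`-quantile `q`, then for `|v| ≤ δ`,
`E[ρ_τ(Y - q - v) - ρ_τ(Y - q)] ≥ (m/2) v²`. -/
theorem stmt10 {Ω : Type*} [MeasureSpace Ω]
    [IsProbabilityMeasure (volume : Measure Ω)]
    (τ : ℝ) (hτ : τ ∈ Set.Ioo (0:ℝ) 1)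
    (Y : Ω → ℝ) (hYm : Measurable Y)
    (F : ℝ → ℝ) (hF : ∀ y, F y = (volume {ω | Y ω ≤ y}).toReal)
    (q : ℝ) (hq : F q = τ)
    (m δ : ℝ) (hm : 0 < m) (hδ : 0 < δ)
    (hlow : ∀ u ∈ Set.Icc (0:ℝ) δ, m * u ≤ F (q + u) - F q)
    (hup : ∀ u ∈ Set.Icc (-δ) (0:ℝ), m * |u| ≤ F q - F (q + u))
    (ρ : ℝ → ℝ) (hρ : ∀ u : ℝ, ρ u = u * (τ - if u < 0 then 1 else 0)) :
    ∀ v : ℝ, |v| ≤ δ →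
      m / 2 * v ^ 2 ≤ ∫ ω, (ρ (Y ω - q - v) - ρ (Y ω - q)) := by
  intro v hv
  obtain ⟨hv1, hv2⟩ := abs_le.mp hv
  set D : Ω → ℝ := fun ω => max (q + v - Y ω) 0 - max (q - Y ω) 0 with hD_def
  -- Step A: pointwise identity
  have hpt : ∀ ω, ρ (Y ω - q - v) - ρ (Y ω - q) = -(τ * v) + D ω := by
    intro ω
    rw [hρ, hρ]
    simp only [hD_def]
    rcases lt_or_ge (Y ω - q - v) 0 with h1 | h1 <;> rcases lt_or_ge (Y ω - q) 0 with h2 | h2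
    · rw [if_pos h1, if_pos h2, max_eq_left (by linarith), max_eq_left (by linarith)]; ring
    · rw [if_pos h1, if_neg (not_lt.mpr h2), max_eq_left (by linarith),
        max_eq_right (by linarith)]; ring
    · rw [if_neg (not_lt.mpr h1), if_pos h2, max_eq_right (by linarith),
        max_eq_left (by linarith)]; ring
    · rw [if_neg (not_lt.mpr h1), if_neg (not_lt.mpr h2), max_eq_right (by linarith),
        max_eq_right (by linarith)]; ring
  -- Step B: integrability of D
  have hDmeas : Measurable D :=
    ((measurable_const.sub hYm).max measurable_const).sub
      ((measurable_const.sub hYm).max measurable_const)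
  have hDint : Integrable D := by
    refine (integrable_const |v|).mono' hDmeas.aestronglyMeasurable ?_
    refine Filter.Eventually.of_forall (fun ω => ?_)
    have := abs_max_sub_max_le_abs (q + v - Y ω) (q - Y ω) 0
    calc ‖D ω‖ = |max (q + v - Y ω) 0 - max (q - Y ω) 0| := rfl
      _ ≤ |(q + v - Y ω) - (q - Y ω)| := this
      _ = |v| := by ring_nf
  -- Step C: Fubini
  have hC : ∫ ω, D ω = ∫ s in q..(q + v), F s := by
    simp_rw [hF]
    exact stmt10_lemC2 Y hYm q (q + v)
  -- Step D: total integral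
  have hTot : ∫ ω, (ρ (Y ω - q - v) - ρ (Y ω - q))
      = -(τ * v) + ∫ s in q..(q + v), F s := by
    have h1 : (fun ω => ρ (Y ω - q - v) - ρ (Y ω - q)) = fun ω => -(τ * v) + D ω :=
      funext hpt
    rw [h1, MeasureTheory.integral_add (integrable_const _) hDint, integral_const,
      probReal_univ, one_smul, hC]
  rw [hTot]
  -- Step E: the lower bound
  have hFmono : Monotone F := by
    intro x y hxy
    rw [hF, hF]
    exact ENNReal.toReal_mono (measure_ne_top _ _)
      (measure_mono (fun ω h => le_trans h hxy))
  have hFint : IntervalIntegrable F volume q (q + v) := hFmono.intervalIntegrable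
  have hsplit : ∫ s in q..(q + v), (F s - τ) = (∫ s in q..(q + v), F s) - τ * v := by
    rw [intervalIntegral.integral_sub hFint intervalIntegrable_const,
      intervalIntegral.integral_const, smul_eq_mul]
    ring
  have hkey : m / 2 * v ^ 2 ≤ ∫ s in q..(q + v), (F s - τ) := by
    rcases le_or_gt 0 v with hv0 | hv0
    · have hmono := intervalIntegral.integral_mono_on (μ := volume)
        (f := fun s => m * (s - q)) (g := fun s => F s - τ)
        (by linarith)
        ((continuous_const.mul (continuous_id.sub continuous_const)).intervalIntegrable q (q + v))
        (hFint.sub intervalIntegrable_const)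
        (fun s hs => by
          show m * (s - q) ≤ F s - τ
          have hu := hlow (s - q) ⟨by linarith [hs.1], by linarith [hs.2]⟩
          rw [add_sub_cancel, hq] at hu
          linarith)
      have hcomp : ∫ s in q..(q + v), (m * (s - q)) = m / 2 * v ^ 2 := by
        rw [intervalIntegral.integral_const_mul,
          intervalIntegral.integral_sub _root_.intervalIntegral.intervalIntegrable_id
            intervalIntegrable_const,
          integral_id, intervalIntegral.integral_const, smul_eq_mul]
        ring
      have hmono' : ∫ s in q..(q + v), (m * (s - q)) ≤ ∫ s in q..(q + v), (F s - τ) := hmono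
      linarith
    · have hswap : ∫ s in q..(q + v), (F s - τ) = ∫ s in (q + v)..q, (τ - F s) := by
        rw [intervalIntegral.integral_symm, ← intervalIntegral.integral_neg]
        congr 1; funext s; ring
      rw [hswap]
      have hFint' : IntervalIntegrable F volume (q + v) q := hFmono.intervalIntegrable
      have hmono := intervalIntegral.integral_mono_on (μ := volume)
        (f := fun s => m * (q - s)) (g := fun s => τ - F s)
        (by linarith)
        ((continuous_const.mul (continuous_const.sub continuous_id)).intervalIntegrable (q + v) q)
        (intervalIntegrable_const.sub hFint')
        (fun s hs => by
          show m * (q - s) ≤ τ - F s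
          have hu := hup (s - q) ⟨by linarith [hs.1], by linarith [hs.2]⟩
          rw [add_sub_cancel, abs_of_nonpos (by linarith [hs.2])] at hu
          rw [hq] at hu
          linarith)
      have hcomp : ∫ s in (q + v)..q, (m * (q - s)) = m / 2 * v ^ 2 := by
        rw [intervalIntegral.integral_const_mul,
          intervalIntegral.integral_sub intervalIntegrable_const
            _root_.intervalIntegral.intervalIntegrable_id,
          integral_id, intervalIntegral.integral_const, smul_eq_mul]
        ring
      have hmono' : ∫ s in (q + v)..q, (m * (q - s)) ≤ ∫ s in (q + v)..q, (τ - F s) := hmono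
      linarith
  rw [hsplit] at hkey
  linarith
end
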